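/- For any commutative ring R and any f ∈ R, the set Min(R) ∩ V(f) of minimal primes containing f is open in Min(R) with the subspace Zariski topology. -/

import Mathlib

lemma aux_key {R : Type*} [CommRing R] (f : R) (p : Ideal R) [p.IsPrime]
    (hmin : p ∈ minimalPrimes R) (hf : f ∈ p) :
    ∃ s ∉ p, ∃ n : ℕ, s * f ^ n = 0 := by
  have h1 : algebraMap R (Localization p.primeCompl) f ∈
      IsLocalRing.maximalIdeal (Localization p.primeCompl) :=
    (IsLocalization.AtPrime.to_map_mem_maximal_iff _ p f).mpr hf
  have h2 : IsNilpotent (algebraMap R (Localization p.primeCompl) f) :=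
    haveI := Ring.KrullDimLE.of_isLocalization p hmin (Localization p.primeCompl)
    Ring.KrullDimLE.isNilpotent_iff_mem_maximalIdeal.mpr h1
  obtain ⟨n, hn⟩ := h2
  rw [← map_pow] at hn
  obtain ⟨⟨s, hs⟩, hsn⟩ := (IsLocalization.map_eq_zero_iff p.primeCompl _ _).mp hn
  exact ⟨s, hs, n, hsn⟩

/-- For any commutative ring `R` and `f ∈ R`, the set `Min(R) ∩ V(f)` is open in `Min(R)`
with the subspace Zariski topology. -/
theorem stmt2 {R : Type*} [CommRing R] (f : R) :
    IsOpen {p : {p : PrimeSpectrum R // p.asIdeal ∈ minimalPrimes R} | f ∈ p.1.asIdeal} := by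
  rw [isOpen_induced_iff]
  refine ⟨⋃ (s : R) (_ : ∃ n : ℕ, s * f ^ n = 0), (PrimeSpectrum.basicOpen s : Set (PrimeSpectrum R)),
    isOpen_iUnion fun s => isOpen_iUnion fun _ => (PrimeSpectrum.basicOpen s).2, ?_⟩
  ext ⟨p, hp⟩
  simp only [Set.mem_preimage, Set.mem_iUnion, Set.mem_setOf_eq,
    PrimeSpectrum.mem_basicOpen]
  constructor
  · rintro ⟨s, ⟨n, hn⟩, hs⟩
    have : s * f ^ n ∈ p.asIdeal := hn ▸ p.asIdeal.zero_mem
    have hfn : f ^ n ∈ p.asIdeal := (p.isPrime.mem_or_mem this).resolve_left hs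
    exact p.isPrime.mem_of_pow_mem n hfn
  · intro hf
    obtain ⟨s, hs, n, hsn⟩ := aux_key f p.asIdeal hp hf
    exact ⟨s, ⟨n, hsn⟩, hs⟩
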